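/- For any positive reals y₁, y₂, y₄, δ with y₃ ≥ 1, if m ≥ (2/y₄)·(y₂·ln(2·y₂·y₃/y₄) + ln(y₁/δ)), then y₁·exp(y₂·ln(y₃·m) − y₄·m) ≤ δ. -/

import Mathlib

theorem stmt3 (y₁ y₂ y₃ y₄ δ m : ℝ) (h1 : 0 < y₁) (h2 : 0 < y₂) (h3 : 1 ≤ y₃)
    (h4 : 0 < y₄) (hδ : 0 < δ) (hm : 0 < m)
    (h : m ≥ (2 / y₄) * (y₂ * Real.log (2 * y₂ * y₃ / y₄) + Real.log (y₁ / δ))) :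
    y₁ * Real.exp (y₂ * Real.log (y₃ * m) - y₄ * m) ≤ δ := by
  have h3' : (0:ℝ) < y₃ := lt_of_lt_of_le one_pos h3
  set γ : ℝ := y₄ / (2 * y₂ * y₃) with hγdef
  have hγ : 0 < γ := by positivity
  have hinv : γ = (2 * y₂ * y₃ / y₄)⁻¹ := by
    rw [hγdef, inv_div]
  have key : Real.log (y₃ * m) ≤ y₄ * m / (2 * y₂) + Real.log (2 * y₂ * y₃ / y₄) := by
    have hlog : Real.log (γ * (y₃ * m)) ≤ γ * (y₃ * m) :=
      le_trans (Real.log_le_sub_one_of_pos (by positivity)) (by linarith)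
    rw [Real.log_mul (ne_of_gt hγ) (by positivity), hinv, Real.log_inv] at hlog
    have hγm : (2 * y₂ * y₃ / y₄)⁻¹ * (y₃ * m) = y₄ * m / (2 * y₂) := by
      field_simp
    rw [hγm] at hlog
    linarith
  -- main exponent inequality
  have hmain : Real.log y₁ + (y₂ * Real.log (y₃ * m) - y₄ * m) ≤ Real.log δ := by
    have h' : y₄ * m / 2 ≥ y₂ * Real.log (2 * y₂ * y₃ / y₄) + Real.log (y₁ / δ) := by
      have := mul_le_mul_of_nonneg_left h (le_of_lt (div_pos h4 two_pos))
      calc y₂ * Real.log (2 * y₂ * y₃ / y₄) + Real.log (y₁ / δ)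
          = (y₄ / 2) * ((2 / y₄) * (y₂ * Real.log (2 * y₂ * y₃ / y₄) + Real.log (y₁ / δ))) := by
            field_simp
        _ ≤ (y₄ / 2) * m := this
        _ = y₄ * m / 2 := by ring
    have hlogdiv : Real.log (y₁ / δ) = Real.log y₁ - Real.log δ :=
      Real.log_div (ne_of_gt h1) (ne_of_gt hδ)
    have hmul : y₂ * Real.log (y₃ * m) ≤ y₄ * m / 2 + y₂ * Real.log (2 * y₂ * y₃ / y₄) := by
      have := mul_le_mul_of_nonneg_left key (le_of_lt h2)
      have heq : y₂ * (y₄ * m / (2 * y₂)) = y₄ * m / 2 := by field_simp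
      nlinarith
    linarith [hlogdiv ▸ h']
  calc y₁ * Real.exp (y₂ * Real.log (y₃ * m) - y₄ * m)
      = Real.exp (Real.log y₁ + (y₂ * Real.log (y₃ * m) - y₄ * m)) := by
        rw [Real.exp_add, Real.exp_log h1]
    _ ≤ Real.exp (Real.log δ) := Real.exp_le_exp.mpr hmain
    _ = δ := Real.exp_log hδ
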